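/- Let E^C_{k_x} (resp. G^C_{k_x}) be the generating function for coloured partitions satisfying the Capparelli difference matrix C (rows a:(2,2,2), c:(1,1,2), d:(0,1,2)) whose largest part equals (resp. is at most) k with colour at most x in the order a < c < d at value k. Then for all k ≥ 1: E^C_{k_d} = d q^k (E^C_{k_a} + G^C_{(k-1)_c}), E^C_{k_c} = c q^k G^C_{(k-1)_c}, and E^C_{k_a} = a q^k G^C_{(k-2)_d}. -/

import Mathlib

noncomputable section

/-- The q-Pochhammer symbol `(x;q)_n = ∏_{i=0}^{n-1} (1 - x q^i)`. -/
def qPoch (x q : ℂ) (n : ℕ) : ℂ := ∏ i ∈ Finset.range n, (1 - x * q ^ i)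


/-- The Capparelli difference matrix, colours `0 = a`, `1 = c`, `2 = d`. -/
def capMat : Fin 3 → Fin 3 → ℕ := ![![2,2,2],![1,1,2],![0,1,2]]

/-- A coloured partition (written with largest part first) in the Capparelli class `𝒞`:
parts are positive, and a part of colour `x` followed by a part of colour `y` must exceed
it by at least `capMat x y`.  (These gap conditions encode the order
`1_a < 1_c < 1_d < 2_a < ⋯`.) -/
def CapValid (l : List (ℕ × Fin 3)) : Prop :=
  (∀ p ∈ l, 1 ≤ p.1) ∧ l.Chain' (fun p r => r.1 + capMat p.2 r.2 ≤ p.1)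

/-- The weight of a coloured partition. -/
def wt3 (l : List (ℕ × Fin 3)) : ℕ := (l.map Prod.fst).sum

/-- The number of parts of colour `i`. -/
def nc3 (l : List (ℕ × Fin 3)) (i : Fin 3) : ℕ := (l.map Prod.snd).count i

/-- `G^C` bounded by the coloured integer `m_x`: generating function for Capparelli
coloured partitions all of whose parts are at most `m_x` in the order
`1_a < 1_c < 1_d < 2_a < ⋯` (encoded by the rank `3·value + colour`). -/
def GCle (q a c d : ℂ) (m : ℤ) (x : Fin 3) : ℂ :=
  ∑' l : {l : List (ℕ × Fin 3) //
      CapValid l ∧ ∀ p ∈ l, 3 * (p.1 : ℤ) + (p.2 : ℕ) ≤ 3 * m + (x : ℕ)},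
    q ^ wt3 l.1 * a ^ nc3 l.1 0 * c ^ nc3 l.1 1 * d ^ nc3 l.1 2

/-- `E^C_{k_x}`: generating function for Capparelli coloured partitions whose largest
part is exactly `k` with colour `x`. -/
def ECeq (q a c d : ℂ) (m : ℕ) (x : Fin 3) : ℂ :=
  ∑' l : {l : List (ℕ × Fin 3) // CapValid l ∧ l.head? = some (m, x)},
    q ^ wt3 l.1 * a ^ nc3 l.1 0 * c ^ nc3 l.1 1 * d ^ nc3 l.1 2

namespace CapAux

abbrev P3 := ℕ × Fin 3

def rk (p : P3) : ℕ := 3 * p.1 + (p.2 : ℕ)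

abbrev Rel (p r : P3) : Prop := r.1 + capMat p.2 r.2 ≤ p.1

lemma capMat_key : ∀ x y : Fin 3, (y : ℕ) < (x : ℕ) + 3 * capMat x y := by decide

lemma rk_lt {p r : P3} (h : Rel p r) : rk r < rk p := by
  have := capMat_key p.2 r.2
  simp only [Rel] at h
  simp only [rk]
  omega

lemma rk_le_head {l : List P3} (h : l.Chain' Rel) :
    ∀ p ∈ l, ∀ hd, l.head? = some hd → rk p ≤ rk hd := by
  induction l with
  | nil => intro p hp; simp at hp
  | cons x t ih =>
    intro p hp hd hhd
    simp only [List.head?_cons, Option.some.injEq] at hhd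
    subst hhd
    simp only [List.Chain', List.isChain_cons] at h
    rcases List.mem_cons.mp hp with h1 | h1
    · subst h1; exact le_refl _
    · match t, h1 with
      | y :: t', h1 =>
        have hxy : Rel x y := h.1 y rfl
        exact le_trans (ih h.2 p h1 y rfl) (le_of_lt (rk_lt hxy))

def f (q a c d : ℂ) (l : List P3) : ℂ :=
  q ^ wt3 l * a ^ nc3 l 0 * c ^ nc3 l 1 * d ^ nc3 l 2

lemma f_cons (q a c d : ℂ) (k : ℕ) (x : Fin 3) (t : List P3) :
    f q a c d ((k, x) :: t) = (![a,c,d] x) * q ^ k * f q a c d t := by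
  fin_cases x <;>
    · simp [f, wt3, nc3, List.count_cons, pow_add, pow_succ]
      ring

end CapAux

namespace CapAux

def GSet (B : ℤ) : Set (List P3) :=
  {l | CapValid l ∧ ∀ p ∈ l, 3 * (p.1 : ℤ) + (p.2 : ℕ) ≤ B}

def TSet (k : ℕ) (x : Fin 3) : Set (List P3) :=
  {t | CapValid t ∧ ∀ r ∈ t.head?.toList, r.1 + capMat x r.2 ≤ k}

def ESet (k : ℕ) (x : Fin 3) : Set (List P3) :=
  {l | CapValid l ∧ l.head? = some (k, x)}

def consEquiv (k : ℕ) (x : Fin 3) (hk : 1 ≤ k) :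
    {l : List P3 // CapValid l ∧ l.head? = some (k, x)} ≃
    {t : List P3 // CapValid t ∧ ∀ r ∈ t.head?.toList, r.1 + capMat x r.2 ≤ k} where
  toFun l := ⟨l.1.tail, by
    obtain ⟨l, ⟨hpos, hch⟩, hh⟩ := l
    match l, hh with
    | p :: t, hh =>
      simp only [List.head?_cons, Option.some.injEq] at hh
      subst hh
      simp only [List.Chain', List.isChain_cons] at hch
      refine ⟨⟨fun p hp => hpos p (List.mem_cons_of_mem _ hp), hch.2⟩, ?_⟩
      intro r hr
      exact hch.1 r (by simpa using hr)⟩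
  invFun t := ⟨(k, x) :: t.1, by
    obtain ⟨t, ⟨hpos, hch⟩, hh⟩ := t
    refine ⟨⟨?_, ?_⟩, rfl⟩
    · intro p hp
      rcases List.mem_cons.mp hp with rfl | hp
      · exact hk
      · exact hpos p hp
    · exact List.isChain_cons.mpr ⟨fun y hy => hh y (by simpa using hy), hch⟩⟩
  left_inv l := by
    obtain ⟨l, h, hh⟩ := l
    match l, hh with
    | p :: t, hh =>
      simp only [List.head?_cons, Option.some.injEq] at hh
      subst hh
      rfl
  right_inv t := rfl

end CapAux

namespace CapAux

lemma ECeq_eq (q a c d : ℂ) (k : ℕ) (x : Fin 3) (hk : 1 ≤ k) :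
    ECeq q a c d k x =
      (![a,c,d] x) * q ^ k *
        ∑' t : {t : List P3 // CapValid t ∧ ∀ r ∈ t.head?.toList, r.1 + capMat x r.2 ≤ k},
          f q a c d t.1 := by
  have h1 : ECeq q a c d k x
      = ∑' l : {l : List P3 // CapValid l ∧ l.head? = some (k, x)}, f q a c d l.1 := rfl
  rw [h1, ← Equiv.tsum_eq (consEquiv k x hk).symm (fun l => f q a c d l.1)]
  have h2 : ∀ t : {t : List P3 // CapValid t ∧ ∀ r ∈ t.head?.toList, r.1 + capMat x r.2 ≤ k},
      f q a c d ((consEquiv k x hk).symm t).1 = (![a,c,d] x) * q ^ k * f q a c d t.1 := by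
    intro t
    have : ((consEquiv k x hk).symm t).1 = (k, x) :: t.1 := rfl
    rw [this, f_cons]
  rw [tsum_congr h2, tsum_mul_left]

end CapAux

namespace CapAux

lemma rk_injective : Function.Injective rk := by
  rintro ⟨a, b⟩ ⟨u, v⟩ h
  have hb := b.isLt
  have hv := v.isLt
  simp only [rk] at h
  have h1 : a = u ∧ (b : ℕ) = (v : ℕ) := by omega
  exact Prod.ext h1.1 (Fin.ext h1.2)

instance : IsAntisymm ℕ (· > ·) := ⟨fun a b h1 h2 => absurd h1 (not_lt.mpr h2.le)⟩

lemma finite_S2 (N : ℕ) :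
    {l : List ℕ | l.Pairwise (· > ·) ∧ ∀ x ∈ l, x < N}.Finite := by
  apply Set.Finite.of_finite_image (f := List.toFinset)
  · apply Set.Finite.subset ((Finset.range N).powerset.finite_toSet)
    rintro s ⟨l, hl, rfl⟩
    simp only [Finset.coe_powerset, Set.mem_preimage, Set.mem_powerset_iff]
    intro x hx
    simp only [List.coe_toFinset, Set.mem_setOf_eq] at hx
    exact Finset.mem_coe.mpr (Finset.mem_range.mpr (hl.2 x hx))
  · intro l1 hl1 l2 hl2 h
    have hn1 : l1.Nodup := hl1.1.imp (fun h => Nat.ne_of_gt h)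
    have hn2 : l2.Nodup := hl2.1.imp (fun h => Nat.ne_of_gt h)
    have hm : (l1 : Multiset ℕ) = (l2 : Multiset ℕ) := by
      have e1 : l1.toFinset.val = (l1 : Multiset ℕ) := by
        have : l1.toFinset.val = ((l1.dedup : List ℕ) : Multiset ℕ) := rfl
        rw [this, List.dedup_eq_self.mpr hn1]
      have e2 : l2.toFinset.val = (l2 : Multiset ℕ) := by
        have : l2.toFinset.val = ((l2.dedup : List ℕ) : Multiset ℕ) := rfl
        rw [this, List.dedup_eq_self.mpr hn2]
      rw [← e1, ← e2, h]
    exact List.Perm.eq_of_pairwise (fun a b _ _ h1 h2 => absurd h1 (not_lt.mpr h2.le)) hl1.1 hl2.1 (Multiset.coe_eq_coe.mp hm)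

lemma finite_chain_rk (N : ℕ) :
    {l : List P3 | l.Chain' Rel ∧ ∀ p ∈ l, rk p < N}.Finite := by
  apply Set.Finite.of_finite_image (f := List.map rk)
  · apply Set.Finite.subset (finite_S2 N)
    rintro m ⟨l, ⟨hch, hbd⟩, rfl⟩
    constructor
    · rw [← List.isChain_iff_pairwise]
      exact (List.isChain_map rk).mpr (hch.imp fun {a b} h => rk_lt h)
    · intro x hx
      obtain ⟨p, hp, rfl⟩ := List.mem_map.mp hx
      exact hbd p hp
  · exact Function.Injective.injOn (List.map_injective_iff.mpr rk_injective)

end CapAux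

namespace CapAux

lemma tsum_subtype_congr {α : Type*} (g : α → ℂ) {P Q : α → Prop} (h : ∀ x, P x ↔ Q x) :
    ∑' x : {x // P x}, g x.1 = ∑' x : {x // Q x}, g x.1 := by
  have : P = Q := funext fun x => propext (h x)
  subst this; rfl

lemma tail_cond_iff {k : ℕ} {x : Fin 3} {B : ℤ}
    (hB : ∀ v : ℕ, ∀ y : Fin 3, 1 ≤ v → ((v + capMat x y ≤ k) ↔ 3*(v:ℤ) + (y:ℕ) ≤ B))
    {t : List P3} (ht : CapValid t) :
    (∀ r ∈ t.head?.toList, r.1 + capMat x r.2 ≤ k) ↔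
      (∀ p ∈ t, 3*(p.1:ℤ) + (p.2:ℕ) ≤ B) := by
  cases t with
  | nil => simp
  | cons hd t' =>
    constructor
    · intro h p hp
      have hhd : hd.1 + capMat x hd.2 ≤ k := h hd (by simp)
      have h1 : 3*(hd.1:ℤ) + (hd.2:ℕ) ≤ B :=
        (hB hd.1 hd.2 (ht.1 hd (List.mem_cons_self))).mp hhd
      have h2 : rk p ≤ rk hd := rk_le_head ht.2 p hp hd rfl
      simp only [rk] at h2
      push_cast at h1 ⊢
      omega
    · intro h r hr
      simp only [List.head?_cons, Option.toList_some, List.mem_singleton] at hr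
      subst hr
      exact (hB r.1 r.2 (ht.1 r (List.mem_cons_self))).mpr (h r (List.mem_cons_self))

end CapAux

namespace CapAux

lemma cap1_facts : ∀ y : Fin 3,
    ((y:ℕ) ≤ 1 ∧ capMat 1 y = 1) ∨ ((y:ℕ) = 2 ∧ capMat 1 y = 2) := by decide

lemma cap0_facts : ∀ y : Fin 3, (y:ℕ) ≤ 2 ∧ capMat 0 y = 2 := by decide

lemma cap2_facts : ∀ y : Fin 3,
    ((y:ℕ) = 0 ∧ capMat 2 y = 0) ∨ ((y:ℕ) = 1 ∧ capMat 2 y = 1) ∨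
    ((y:ℕ) = 2 ∧ capMat 2 y = 2) := by decide

lemma identity2 (q a c d : ℂ) (k : ℕ) (hk : 1 ≤ k) :
    ECeq q a c d k 1 = c * q ^ k * GCle q a c d ((k : ℤ) - 1) 1 := by
  rw [ECeq_eq q a c d k 1 hk]
  have hv : (![a,c,d] (1 : Fin 3)) = c := rfl
  rw [hv]
  congr 1
  have hG : GCle q a c d ((k : ℤ) - 1) 1 =
      ∑' l : {l : List P3 //
        CapValid l ∧ ∀ p ∈ l, 3 * (p.1 : ℤ) + (p.2 : ℕ) ≤ 3 * ((k:ℤ) - 1) + ((1 : Fin 3) : ℕ)},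
      f q a c d l.1 := rfl
  rw [hG]
  apply tsum_subtype_congr (f q a c d)
  intro t
  constructor
  · rintro ⟨hv', hc⟩
    refine ⟨hv', ?_⟩
    rw [← tail_cond_iff (x := 1) (k := k) ?_ hv']
    · exact hc
    · intro v y h1
      rcases cap1_facts y with ⟨h2, h3⟩ | ⟨h2, h3⟩ <;> rw [h3] <;>
        simp only [Fin.val_one] <;> push_cast <;> omega
  · rintro ⟨hv', hc⟩
    refine ⟨hv', ?_⟩
    rw [tail_cond_iff (x := 1) (k := k) ?_ hv']
    · exact hc
    · intro v y h1
      rcases cap1_facts y with ⟨h2, h3⟩ | ⟨h2, h3⟩ <;> rw [h3] <;>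
        simp only [Fin.val_one] <;> push_cast <;> omega

lemma identity3 (q a c d : ℂ) (k : ℕ) (hk : 1 ≤ k) :
    ECeq q a c d k 0 = a * q ^ k * GCle q a c d ((k : ℤ) - 2) 2 := by
  rw [ECeq_eq q a c d k 0 hk]
  have hv : (![a,c,d] (0 : Fin 3)) = a := rfl
  rw [hv]
  congr 1
  have hG : GCle q a c d ((k : ℤ) - 2) 2 =
      ∑' l : {l : List P3 //
        CapValid l ∧ ∀ p ∈ l, 3 * (p.1 : ℤ) + (p.2 : ℕ) ≤ 3 * ((k:ℤ) - 2) + ((2 : Fin 3) : ℕ)},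
      f q a c d l.1 := rfl
  rw [hG]
  apply tsum_subtype_congr (f q a c d)
  intro t
  have hB : ∀ v : ℕ, ∀ y : Fin 3, 1 ≤ v →
      ((v + capMat 0 y ≤ k) ↔ 3*(v:ℤ) + (y:ℕ) ≤ 3 * ((k:ℤ) - 2) + ((2 : Fin 3) : ℕ)) := by
    intro v y h1
    obtain ⟨h2, h3⟩ := cap0_facts y
    rw [h3]
    simp only [Fin.val_two]
    push_cast
    omega
  constructor
  · rintro ⟨hv', hc⟩
    exact ⟨hv', (tail_cond_iff hB hv').mp hc⟩
  · rintro ⟨hv', hc⟩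
    exact ⟨hv', (tail_cond_iff hB hv').mpr hc⟩

end CapAux

namespace CapAux

lemma identity1 (q a c d : ℂ) (k : ℕ) (hk : 1 ≤ k) :
    ECeq q a c d k 2 =
      d * q ^ k * (ECeq q a c d k 0 + GCle q a c d ((k : ℤ) - 1) 1) := by
  rw [ECeq_eq q a c d k 2 hk]
  have hv : (![a,c,d] (2 : Fin 3)) = d := rfl
  rw [hv]
  congr 1
  -- the three sets
  set F : List P3 → ℂ := f q a c d with hF
  set A : Set (List P3) := {l | CapValid l ∧ l.head? = some (k, (0 : Fin 3))} with hA
  set B : Set (List P3) := {l | CapValid l ∧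
      ∀ p ∈ l, 3 * (p.1 : ℤ) + (p.2 : ℕ) ≤ 3 * ((k:ℤ) - 1) + ((1 : Fin 3) : ℕ)} with hB
  have hS : {t : List P3 | CapValid t ∧ ∀ r ∈ t.head?.toList, r.1 + capMat 2 r.2 ≤ k}
      = A ∪ B := by
    ext t
    simp only [Set.mem_setOf_eq, Set.mem_union, hA, hB]
    constructor
    · rintro ⟨hv', hc⟩
      cases t with
      | nil => exact Or.inr ⟨hv', by simp⟩
      | cons hd t' =>
        have hhd : hd.1 + capMat 2 hd.2 ≤ k := hc hd (by simp)
        by_cases hone : hd = (k, (0 : Fin 3))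
        · exact Or.inl ⟨hv', by rw [hone]; rfl⟩
        · refine Or.inr ⟨hv', ?_⟩
          have hpos : 1 ≤ hd.1 := hv'.1 hd (List.mem_cons_self)
          have hne : ¬(hd.1 = k ∧ (hd.2 : ℕ) = 0) := by
            rintro ⟨h1, h2⟩
            exact hone (Prod.ext h1 (Fin.ext (by simpa using h2)))
          have hbd : 3 * (hd.1 : ℤ) + (hd.2 : ℕ) ≤ 3 * ((k:ℤ) - 1) + ((1 : Fin 3) : ℕ) := by
            rcases cap2_facts hd.2 with ⟨h2, h3⟩ | ⟨h2, h3⟩ | ⟨h2, h3⟩ <;> rw [h3] at hhd <;>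
              simp only [Fin.val_one] <;> push_cast <;> omega
          intro p hp
          have h2 : rk p ≤ rk hd := rk_le_head hv'.2 p hp hd rfl
          simp only [rk] at h2
          push_cast at hbd ⊢
          omega
    · rintro (⟨hv', hh⟩ | ⟨hv', hb⟩)
      · refine ⟨hv', ?_⟩
        intro r hr
        rw [hh] at hr
        simp only [Option.toList_some, List.mem_singleton] at hr
        subst hr
        have : capMat 2 0 = 0 := by decide
        simpa [this]
      · refine ⟨hv', ?_⟩
        intro r hr
        cases t with
        | nil => simp at hr
        | cons hd t' =>
          simp only [List.head?_cons, Option.toList_some, List.mem_singleton] at hr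
          subst hr
          have hpos : 1 ≤ r.1 := hv'.1 r (List.mem_cons_self)
          have hbd := hb r (List.mem_cons_self)
          rcases cap2_facts r.2 with ⟨h2, h3⟩ | ⟨h2, h3⟩ | ⟨h2, h3⟩ <;> rw [h3] <;>
            simp only [Fin.val_one] at hbd <;> push_cast at hbd <;> omega
  have hdisj : Disjoint A B := by
    rw [Set.disjoint_left]
    rintro l ⟨hv', hh⟩ ⟨_, hb⟩
    have hmem : (k, (0 : Fin 3)) ∈ l := List.mem_of_mem_head? (by rw [hh]; rfl)
    have := hb _ hmem
    simp only [Fin.val_one, Fin.val_zero] at this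
    push_cast at this
    omega
  have hAfin : A.Finite := by
    apply (finite_chain_rk (3 * k + 1)).subset
    rintro l ⟨hv', hh⟩
    refine ⟨hv'.2, fun p hp => ?_⟩
    have h2 : rk p ≤ rk (k, (0 : Fin 3)) := rk_le_head hv'.2 p hp _ hh
    simp only [rk, Fin.val_zero] at h2 ⊢
    omega
  have hBfin : B.Finite := by
    apply (finite_chain_rk (3 * k + 1)).subset
    rintro l ⟨hv', hb⟩
    refine ⟨hv'.2, fun p hp => ?_⟩
    have := hb p hp
    simp only [Fin.val_one] at this
    simp only [rk]
    push_cast at this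
    omega
  have h1 : (∑' t : {t : List P3 //
        CapValid t ∧ ∀ r ∈ t.head?.toList, r.1 + capMat 2 r.2 ≤ k}, F t.1)
      = ∑' t : ↥(A ∪ B), F t.1 := by
    rw [← hS]
    rfl
  rw [h1]
  have hsA : Summable (F ∘ ((↑) : A → List P3)) := by
    have := hAfin.to_subtype
    exact Summable.of_finite
  have hsB : Summable (F ∘ ((↑) : B → List P3)) := by
    have := hBfin.to_subtype
    exact Summable.of_finite
  have h2 := Summable.tsum_union_disjoint (f := F) hdisj hsA hsB
  rw [h2]
  rfl

end CapAux

/-- Lemma 2.1 of the paper: for all `k ≥ 1`,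
`E^C_{k_d} = d q^k (E^C_{k_a} + G^C_{(k-1)_c})`,
`E^C_{k_c} = c q^k G^C_{(k-1)_c}`, and
`E^C_{k_a} = a q^k G^C_{(k-2)_d}`. -/
theorem capparelli_step_recurrences (q a c d : ℂ) (k : ℕ) (hk : 1 ≤ k) :
    ECeq q a c d k 2 = d * q ^ k * (ECeq q a c d k 0 + GCle q a c d ((k : ℤ) - 1) 1) ∧
    ECeq q a c d k 1 = c * q ^ k * GCle q a c d ((k : ℤ) - 1) 1 ∧
    ECeq q a c d k 0 = a * q ^ k * GCle q a c d ((k : ℤ) - 2) 2 :=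
  ⟨CapAux.identity1 q a c d k hk, CapAux.identity2 q a c d k hk,
   CapAux.identity3 q a c d k hk⟩
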